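/- Let n ≥ 7 and let G and H be simple graphs on n vertices that share n−1 cards. Then the degree sequences of G and H coincide, i.e., the multiset { deg(v,G) : v ∈ V(G) } equals the multiset { deg(v,H) : v ∈ V(H) }. -/

import Mathlib

open SimpleGraph

/-- `kappa G r` is the number of `r`-cliques of the graph `G`. -/
noncomputable def kappa {V : Type*} (G : SimpleGraph V) (r : ℕ) : ℕ :=
  (G.cliqueSet r).ncard

/-- `degR G r v` is the number of `r`-cliques of `G` that contain the vertex `v`. -/
noncomputable def degR {V : Type*} (G : SimpleGraph V) (r : ℕ) (v : V) : ℕ :=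
  {s | s ∈ G.cliqueSet r ∧ v ∈ s}.ncard

/-- `deg G v` is the degree of the vertex `v` in `G`. -/
noncomputable def deg {V : Type*} (G : SimpleGraph V) (v : V) : ℕ :=
  (G.neighborSet v).ncard

/-- `gcard G v` is the card `G - v`: the induced subgraph of `G` on `V(G) \ {v}`. -/
def gcard {V : Type*} (G : SimpleGraph V) (v : V) : SimpleGraph {x : V // x ≠ v} :=
  G.induce {x : V | x ≠ v}

/-- The maximum degree `Δ(G)`. -/
noncomputable def maxDeg {n : ℕ} (G : SimpleGraph (Fin n)) : ℕ :=
  Finset.univ.sup (fun v => deg G v)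

/-- The minimum degree `δ(G)`. -/
noncomputable def minDeg {n : ℕ} (G : SimpleGraph (Fin n)) : ℕ :=
  sInf (Set.range (fun v => deg G v))

/-- `ℓ(G)`: the number of vertices of maximum degree. -/
noncomputable def numMaxDeg {n : ℕ} (G : SimpleGraph (Fin n)) : ℕ :=
  (Finset.univ.filter (fun v => deg G v = maxDeg G)).card

/-- `G` and `H` share `n-1` cards via the vertices `u`, `w` and the bijection `π`:
for every `v ≠ u`, the card `G - v` is isomorphic to the card `H - π(v)`. -/
def ShareCardsVia {n : ℕ} (G H : SimpleGraph (Fin n)) (u w : Fin n)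
    (π : {x : Fin n // x ≠ u} ≃ {y : Fin n // y ≠ w}) : Prop :=
  ∀ v : {x : Fin n // x ≠ u}, Nonempty (gcard G v.1 ≃g gcard H (π v).1)

/-- `G` and `H` share `n-1` cards. -/
def ShareCards {n : ℕ} (G H : SimpleGraph (Fin n)) : Prop :=
  ∃ (u w : Fin n) (π : {x : Fin n // x ≠ u} ≃ {y : Fin n // y ≠ w}),
    ShareCardsVia G H u w π

open Finset

attribute [local instance 10] Classical.propDecidable

namespace DSR

variable {n : ℕ}

lemma deg_eq (G : SimpleGraph (Fin n)) (x : Fin n) :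
    deg G x = (univ.filter (fun y => G.Adj x y)).card := by
  rw [deg, show G.neighborSet x = ↑(univ.filter (fun y => G.Adj x y)) from ?_,
    Set.ncard_coe_finset]
  ext y; simp [neighborSet]

lemma deg_le (G : SimpleGraph (Fin n)) (x : Fin n) : deg G x + 1 ≤ n := by
  have h1 : (univ.filter (fun y => G.Adj x y)) ⊆ univ.erase x := by
    intro y hy
    simp only [mem_filter] at hy
    exact mem_erase.2 ⟨(G.ne_of_adj hy.2).symm, mem_univ _⟩
  have h2 := card_le_card h1
  rw [card_erase_of_mem (mem_univ x), card_univ, Fintype.card_fin] at h2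
  have hn : 1 ≤ n := by
    rcases Nat.eq_zero_or_pos n with h | h
    · exact absurd (h ▸ x).isLt (by omega)
    · exact h
  rw [deg_eq]; omega

lemma one_le_deg_of_adj {G : SimpleGraph (Fin n)} {x y : Fin n} (h : G.Adj x y) :
    1 ≤ deg G x := by
  rw [deg_eq]
  exact card_pos.2 ⟨y, mem_filter.2 ⟨mem_univ _, h⟩⟩

/-- number of neighbors of `r` = deg, as a filter over `univ.erase r`. -/
lemma deg_eq_erase (G : SimpleGraph (Fin n)) (r : Fin n) :
    deg G r = ((univ.erase r).filter (fun y => G.Adj r y)).card := by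
  rw [deg_eq]
  congr 1
  ext y
  simp only [mem_filter, mem_erase, mem_univ, true_and]
  exact ⟨fun h => ⟨⟨(G.ne_of_adj h).symm, trivial⟩, h⟩, fun h => h.2⟩

noncomputable def fdeg (G : SimpleGraph (Fin n)) (v x : Fin n) : ℕ :=
  deg G x - if G.Adj v x then 1 else 0

noncomputable def CD (G : SimpleGraph (Fin n)) (v : Fin n) : Multiset ℕ :=
  (univ.erase v).val.map (fdeg G v)

lemma deg_gcard (G : SimpleGraph (Fin n)) (v : Fin n) (x : {y : Fin n // y ≠ v}) :
    deg (gcard G v) x = fdeg G v x.1 := by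
  have himg : Subtype.val '' ((gcard G v).neighborSet x) = G.neighborSet x.1 \ {v} := by
    ext y
    simp only [Set.mem_image, neighborSet, Set.mem_setOf_eq, Set.mem_diff,
      Set.mem_singleton_iff, gcard]
    constructor
    · rintro ⟨⟨z, hz⟩, hadj, rfl⟩
      exact ⟨by simpa using hadj, hz⟩
    · rintro ⟨hadj, hy⟩
      exact ⟨⟨y, hy⟩, by simpa using hadj, rfl⟩
  have h1 : deg (gcard G v) x = (G.neighborSet x.1 \ {v}).ncard := by
    rw [deg, ← himg, Set.ncard_image_of_injective _ Subtype.val_injective]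
  rw [h1, fdeg]
  by_cases hadj : G.Adj v x.1
  · have hv : v ∈ G.neighborSet x.1 := by simpa using hadj.symm
    rw [Set.ncard_diff_singleton_of_mem hv, if_pos hadj, deg]
  · have hv : v ∉ G.neighborSet x.1 := by
      simp only [neighborSet, Set.mem_setOf_eq]
      exact fun h => hadj h.symm
    rw [Set.diff_singleton_eq_self hv, if_neg hadj, Nat.sub_zero, deg]
-- subtype univ mapped to erase
lemma subtype_univ_map (v : Fin n) :
    (univ : Finset {x : Fin n // x ≠ v}).map (Function.Embedding.subtype _) = univ.erase v := by
  have h1 : (univ : Finset {x : Fin n // x ≠ v}) = (univ : Finset (Fin n)).subtype _ := by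
    ext x; simp
  rw [h1, Finset.subtype_map, Finset.filter_ne']

lemma erase_val_map (v : Fin n) (f : Fin n → ℕ) :
    (univ.erase v).val.map f
      = (univ : Finset {x : Fin n // x ≠ v}).val.map (fun x => f x.1) := by
  rw [← subtype_univ_map v, Finset.map_val, Multiset.map_map]
  rfl

-- degree multiset iso invariance (general fintypes)
lemma degmultiset_iso {α β : Type*} [Fintype α] [Fintype β] {K1 : SimpleGraph α}
    {K2 : SimpleGraph β} (e : K1 ≃g K2) :
    univ.val.map (fun x => deg K1 x) = univ.val.map (fun y => deg K2 y) := by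
  have h1 : (univ : Finset β) = (univ : Finset α).map e.toEquiv.toEmbedding :=
    (Finset.map_univ_equiv e.toEquiv).symm
  rw [h1, Finset.map_val, Multiset.map_map]
  apply Multiset.map_congr rfl
  intro x _
  show deg K1 x = deg K2 (e x)
  rw [deg, deg, ← Nat.card_coe_set_eq, ← Nat.card_coe_set_eq]
  exact Nat.card_congr (e.mapNeighborSet x)

lemma CD_eq_degmultiset (G : SimpleGraph (Fin n)) (v : Fin n) :
    (univ.erase v).val.map (fun x => deg G x - if G.Adj v x then 1 else 0)
      = univ.val.map (fun x => deg (gcard G v) x) := by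
  rw [erase_val_map]
  apply Multiset.map_congr rfl
  intro x _
  exact (deg_gcard G v x).symm

lemma CD_share {G H : SimpleGraph (Fin n)} {v y : Fin n}
    (iso : gcard G v ≃g gcard H y) : CD G v = CD H y := by
  show (univ.erase v).val.map (fun x => deg G x - if G.Adj v x then 1 else 0)
      = (univ.erase y).val.map (fun x => deg H x - if H.Adj y x then 1 else 0)
  rw [CD_eq_degmultiset, CD_eq_degmultiset, degmultiset_iso iso]

lemma sum_boole' (s : Finset (Fin n)) (p : Fin n → Prop) [DecidablePred p] :
    ∑ x ∈ s, (if p x then 1 else 0) = (s.filter p).card := by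
  simp [Finset.sum_boole]

lemma CD_sum (G : SimpleGraph (Fin n)) (v : Fin n) :
    (CD G v).sum + 2 * deg G v = ∑ x ∈ univ, deg G x := by
  have hsum : (CD G v).sum = ∑ x ∈ univ.erase v, fdeg G v x := rfl
  have h1 : ∑ x ∈ univ.erase v, fdeg G v x + ∑ x ∈ univ.erase v, (if G.Adj v x then 1 else 0)
      = ∑ x ∈ univ.erase v, deg G x := by
    rw [← Finset.sum_add_distrib]
    apply Finset.sum_congr rfl
    intro x _
    rw [fdeg]
    have : (if G.Adj v x then 1 else 0) ≤ deg G x := by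
      by_cases h : G.Adj v x
      · simpa [h] using one_le_deg_of_adj h.symm
      · simp [h]
    omega
  have h2 : ∑ x ∈ univ.erase v, (if G.Adj v x then 1 else 0) = deg G v := by
    rw [sum_boole', ← deg_eq_erase]
  have h3 : ∑ x ∈ univ.erase v, deg G x + deg G v = ∑ x ∈ univ, deg G x :=
    Finset.sum_erase_add _ _ (mem_univ v)
  omega

lemma CD_countP (G : SimpleGraph (Fin n)) (v : Fin n) (p : ℕ → Prop) [DecidablePred p] :
    (CD G v).countP p = ((univ.erase v).filter (fun x => p (fdeg G v x))).card := by
  rw [CD, Multiset.countP_map]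
  rfl

noncomputable def AA (G : SimpleGraph (Fin n)) (r : Fin n) (T : ℕ) : ℕ :=
  ((univ.erase r).filter (fun x => T ≤ deg G x)).card
noncomputable def BB (G : SimpleGraph (Fin n)) (r : Fin n) (T : ℕ) : ℕ :=
  ((univ.erase r).filter (fun x => deg G x = T)).card
noncomputable def mm (G : SimpleGraph (Fin n)) (r : Fin n) (T : ℕ) : ℕ :=
  ((univ.erase r).filter (fun x => deg G x = T ∧ G.Adj r x)).card

lemma nonnbr_count (G : SimpleGraph (Fin n)) (x : Fin n) :
    ((univ.erase x).filter (fun v => ¬ G.Adj v x)).card + deg G x = n - 1 := by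
  have h1 : ((univ.erase x).filter (fun v => G.Adj v x)).card = deg G x := by
    rw [deg_eq_erase]
    congr 1
    ext y
    simp only [mem_filter, mem_erase]
    rw [G.adj_comm]
  have h2 := Finset.card_filter_add_card_filter_not
    (s := univ.erase x) (p := fun v => G.Adj v x)
  rw [card_erase_of_mem (mem_univ x), card_univ, Fintype.card_fin] at h2
  omega

lemma master (G : SimpleGraph (Fin n)) (u : Fin n) (T : ℕ) (hT1 : 1 ≤ T)
    (hT2 : T + 2 ≤ n) :
    ∑ v ∈ univ.erase u, (CD G v).countP (fun t => T ≤ t)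
      = (n-2) * AA G u (T+1) + (n-2-T) * BB G u T + mm G u T
        + (if T+1 ≤ deg G u then n-1 else if deg G u = T then n-1-T else 0) := by
  -- step 1: countP to double sum
  have step1 : ∑ v ∈ univ.erase u, (CD G v).countP (fun t => T ≤ t)
      = ∑ v ∈ univ.erase u, ∑ x ∈ univ.erase v, (if T ≤ fdeg G v x then 1 else 0) := by
    apply Finset.sum_congr rfl
    intro v _
    rw [CD_countP, sum_boole']
  -- step 2: swap
  have step2 : ∑ v ∈ univ.erase u, ∑ x ∈ univ.erase v, (if T ≤ fdeg G v x then 1 else 0)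
      = ∑ x ∈ univ, ∑ v ∈ (univ.erase u).erase x, (if T ≤ fdeg G v x then 1 else 0) := by
    apply Finset.sum_comm'
    intro v x
    simp only [mem_erase, mem_univ, and_true, true_and]
    tauto
  -- inner sum evaluation
  have hlow : ∀ x, deg G x < T →
      ∑ v ∈ (univ.erase u).erase x, (if T ≤ fdeg G v x then 1 else 0) = 0 := by
    intro x hx
    apply Finset.sum_eq_zero
    intro v _
    have : fdeg G v x ≤ deg G x := Nat.sub_le _ _
    rw [if_neg (by omega)]
  have hhigh : ∀ x, T + 1 ≤ deg G x →
      ∑ v ∈ (univ.erase u).erase x, (if T ≤ fdeg G v x then 1 else 0)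
        = ((univ.erase u).erase x).card := by
    intro x hx
    have hone : ∀ v ∈ (univ.erase u).erase x, (if T ≤ fdeg G v x then 1 else 0) = 1 := by
      intro v _
      rw [if_pos]
      rw [fdeg]
      split <;> omega
    rw [Finset.sum_congr rfl hone, Finset.sum_const, smul_eq_mul, mul_one]
  have heqcase : ∀ x, deg G x = T →
      ∑ v ∈ (univ.erase u).erase x, (if T ≤ fdeg G v x then 1 else 0)
        = (((univ.erase u).erase x).filter (fun v => ¬ G.Adj v x)).card := by
    intro x hx
    rw [sum_boole']
    congr 1
    apply Finset.filter_congr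
    intro v _
    rw [fdeg, hx]
    constructor
    · intro h
      intro hadj
      rw [if_pos hadj] at h
      omega
    · intro h
      rw [if_neg h]
      omega
  -- the u term
  have huterm : ∑ v ∈ (univ.erase u).erase u, (if T ≤ fdeg G v u then 1 else 0)
      = (if T+1 ≤ deg G u then n-1 else if deg G u = T then n-1-T else 0) := by
    rcases Nat.lt_trichotomy (deg G u) T with h | h | h
    · rw [hlow u h, if_neg (by omega), if_neg (by omega)]
    · rw [heqcase u h, if_neg (by omega), if_pos h, Finset.erase_idem]
      have := nonnbr_count G u
      omega
    · rw [hhigh u (by omega), if_pos (by omega), Finset.erase_idem,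
        card_erase_of_mem (mem_univ u), card_univ, Fintype.card_fin]
  -- middle case value
  have hmid : ∀ x ∈ univ.erase u, deg G x = T →
      ∑ v ∈ (univ.erase u).erase x, (if T ≤ fdeg G v x then 1 else 0)
        = (n-2-T) + (if G.Adj u x then 1 else 0) := by
    intro x hx hdx
    rw [heqcase x hdx]
    have hxu : x ≠ u := (mem_erase.1 hx).1
    have hne : (univ.erase u).erase x = (univ.erase x).erase u := Finset.erase_right_comm
    rw [hne, Finset.filter_erase]
    have htot := nonnbr_count G x
    rw [hdx] at htot
    by_cases hadj : G.Adj u x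
    · rw [Finset.erase_eq_of_notMem (by simp [hadj]), if_pos hadj]
      omega
    · have hu : u ∈ (univ.erase x).filter (fun v => ¬ G.Adj v x) := by
        simp only [mem_filter, mem_erase, mem_univ, and_true, true_and]
        exact ⟨fun h => hxu h.symm, hadj⟩
      rw [card_erase_of_mem hu, if_neg hadj]
      omega
  -- split the sum over erase u
  have hsplit1 : ∑ x ∈ univ.erase u,
        ∑ v ∈ (univ.erase u).erase x, (if T ≤ fdeg G v x then 1 else 0)
      = (n-2) * AA G u (T+1) + ((n-2-T) * BB G u T + mm G u T) := by
    rw [← Finset.sum_filter_add_sum_filter_not (univ.erase u) (fun x => T+1 ≤ deg G x)]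
    congr 1
    · -- high part
      have : ∀ x ∈ (univ.erase u).filter (fun x => T+1 ≤ deg G x),
          ∑ v ∈ (univ.erase u).erase x, (if T ≤ fdeg G v x then 1 else 0) = n-2 := by
        intro x hx
        rw [mem_filter] at hx
        rw [hhigh x hx.2, card_erase_of_mem hx.1, card_erase_of_mem (mem_univ u),
          card_univ, Fintype.card_fin]
        omega
      rw [Finset.sum_congr rfl this, Finset.sum_const, smul_eq_mul, AA, mul_comm]
    · -- rest
      rw [← Finset.sum_filter_add_sum_filter_not
        ((univ.erase u).filter (fun x => ¬ (T+1 ≤ deg G x))) (fun x => deg G x = T)]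
      have hzero : ∀ x ∈ ((univ.erase u).filter (fun x => ¬ (T+1 ≤ deg G x))).filter
          (fun x => ¬ (deg G x = T)),
          ∑ v ∈ (univ.erase u).erase x, (if T ≤ fdeg G v x then 1 else 0) = 0 := by
        intro x hx
        simp only [mem_filter] at hx
        exact hlow x (by omega)
      rw [Finset.sum_congr rfl hzero, Finset.sum_const, smul_eq_mul, mul_zero, add_zero]
      have hset : ((univ.erase u).filter (fun x => ¬ (T+1 ≤ deg G x))).filter
          (fun x => deg G x = T) = (univ.erase u).filter (fun x => deg G x = T) := by
        rw [Finset.filter_filter]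
        apply Finset.filter_congr
        intro x _
        constructor
        · exact fun h => h.2
        · exact fun h => ⟨by omega, h⟩
      rw [hset]
      have : ∀ x ∈ (univ.erase u).filter (fun x => deg G x = T),
          ∑ v ∈ (univ.erase u).erase x, (if T ≤ fdeg G v x then 1 else 0)
            = (n-2-T) + (if G.Adj u x then 1 else 0) := by
        intro x hx
        rw [mem_filter] at hx
        exact hmid x hx.1 hx.2
      rw [Finset.sum_congr rfl this, Finset.sum_add_distrib, Finset.sum_const,
        smul_eq_mul, sum_boole', Finset.filter_filter, mul_comm]
      rfl
  rw [step1, step2, ← Finset.sum_erase_add _ _ (mem_univ u), hsplit1, huterm]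
  ring

section Transfer

variable {G H : SimpleGraph (Fin n)} {u w : Fin n}
  (π : {x : Fin n // x ≠ u} ≃ {y : Fin n // y ≠ w})

lemma erase_sum_subtype (u : Fin n) (F : Fin n → ℕ) :
    ∑ v ∈ univ.erase u, F v = ∑ x : {x : Fin n // x ≠ u}, F x.1 := by
  exact Finset.sum_subtype (p := fun x => x ≠ u) (univ.erase u) (fun x => by simp) F

lemma sum_transfer (F : Fin n → ℕ) :
    ∑ y ∈ univ.erase w, F y = ∑ x : {x : Fin n // x ≠ u}, F (π x).1 := by
  rw [erase_sum_subtype w F]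
  exact (Equiv.sum_comp π (fun y => F y.1)).symm

variable (hpoint : ∀ x : {x : Fin n // x ≠ u}, deg G x.1 = deg H (π x).1 + 1)

include hpoint in
lemma BB_transfer (T : ℕ) : BB H w T = BB G u (T+1) := by
  rw [BB, BB, card_filter, card_filter, sum_transfer π, erase_sum_subtype]
  apply Finset.sum_congr rfl
  intro x _
  have := hpoint x
  split_ifs <;> omega

include hpoint in
lemma AA_transfer (T : ℕ) : AA H w T = AA G u (T+1) := by
  rw [AA, AA, card_filter, card_filter, sum_transfer π, erase_sum_subtype]
  apply Finset.sum_congr rfl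
  intro x _
  have := hpoint x
  split_ifs <;> omega

lemma AA_split (G : SimpleGraph (Fin n)) (u : Fin n) (T : ℕ) :
    AA G u T = AA G u (T+1) + BB G u T := by
  rw [AA, AA, BB]
  rw [← Finset.card_filter_add_card_filter_not
    (s := (univ.erase u).filter (fun x => T ≤ deg G x)) (p := fun x => T+1 ≤ deg G x)]
  congr 1
  · rw [Finset.filter_filter]
    congr 1
    apply Finset.filter_congr
    intro x _
    constructor
    · exact fun h => h.2
    · exact fun h => ⟨by omega, h⟩
  · rw [Finset.filter_filter]
    congr 1
    apply Finset.filter_congr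
    intro x _
    constructor
    · rintro ⟨h1, h2⟩; omega
    · intro h; omega

variable (SH : ∀ x : {x : Fin n // x ≠ u}, CD G x.1 = CD H (π x).1)

include SH hpoint in
lemma ET (T : ℕ) (hT1 : 1 ≤ T) (hT2 : T + 2 ≤ n) :
    T * BB G u (T+1) + (n-2-T) * BB G u T + mm G u T
        + (if T+1 ≤ deg G u then n-1 else if deg G u = T then n-1-T else 0)
      = mm H w T
        + (if T+1 ≤ deg H w then n-1 else if deg H w = T then n-1-T else 0) := by
  have hG := master G u T hT1 hT2
  have hH := master H w T hT1 hT2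
  have hGH : ∑ v ∈ univ.erase u, (CD G v).countP (fun t => T ≤ t)
      = ∑ y ∈ univ.erase w, (CD H y).countP (fun t => T ≤ t) := by
    rw [erase_sum_subtype u, sum_transfer π]
    apply Finset.sum_congr rfl
    intro x _
    rw [SH x]
  rw [hG, hH] at hGH
  rw [BB_transfer π hpoint T, AA_transfer π hpoint (T+1)] at hGH
  rw [AA_split G u (T+1)] at hGH
  have hmul : ∀ a b : ℕ, (n-2) * (a + b)
      = (n-2) * a + T * b + (n-2-T) * b := by
    intro a b
    have h : T + (n-2-T) = n-2 := by omega
    calc (n-2) * (a + b) = (n-2) * a + (n-2) * b := by ring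
    _ = (n-2) * a + (T + (n-2-T)) * b := by rw [h]
    _ = (n-2) * a + T * b + (n-2-T) * b := by ring
  rw [hmul] at hGH
  rw [show T+1+1 = T+2 from rfl] at hGH
  generalize (n-2) * AA G u (T+2) = a at hGH
  generalize T * BB G u (T+1) = b at hGH
  generalize hc : (n-2-T) * BB G u (T+1) = c at hGH
  generalize (n-2-T) * BB G u T = e at hGH
  omega

end Transfer

section Bounds

variable (G : SimpleGraph (Fin n)) (r : Fin n)

lemma mm_le_BB (T : ℕ) : mm G r T ≤ BB G r T := by
  apply card_le_card
  intro x hx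
  simp only [mm, mem_filter] at hx ⊢
  exact ⟨hx.1, hx.2.1⟩

lemma mm_le_deg (T : ℕ) : mm G r T ≤ deg G r := by
  rw [deg_eq_erase]
  apply card_le_card
  intro x hx
  simp only [mm, mem_filter] at hx ⊢
  exact ⟨hx.1, hx.2.2⟩

lemma mm_pair_le_deg (T T' : ℕ) (h : T ≠ T') : mm G r T + mm G r T' ≤ deg G r := by
  rw [deg_eq_erase]
  rw [mm, mm, ← Finset.card_union_of_disjoint ?hd]
  · apply card_le_card
    intro x hx
    simp only [mem_union, mem_filter] at hx ⊢
    rcases hx with hx | hx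
    · exact ⟨hx.1, hx.2.2⟩
    · exact ⟨hx.1, hx.2.2⟩
  case hd =>
    rw [Finset.disjoint_left]
    intro x hx hx'
    simp only [mem_filter] at hx hx'
    exact h (hx.2.1 ▸ hx'.2.1 ▸ rfl)

/-- the three classes of non-neighbors bound -/
lemma nonnbr_pair (T1 T2 : ℕ) (h1 : 1 ≤ T1) (h2 : 1 ≤ T2) (hne : T1 ≠ T2) :
    BB G r T1 + BB G r T2 + BB G r 0 + deg G r ≤ mm G r T1 + mm G r T2 + (n-1) := by
  have hScard : ((univ.erase r).filter (fun y => ¬ G.Adj r y)).card + deg G r = n - 1 := by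
    have h2' := Finset.card_filter_add_card_filter_not
      (s := univ.erase r) (p := fun y => G.Adj r y)
    rw [← deg_eq_erase] at h2'
    rw [card_erase_of_mem (mem_univ r), card_univ, Fintype.card_fin] at h2'
    omega
  have hBBsplit : ∀ T, BB G r T = mm G r T
      + ((univ.erase r).filter (fun y => deg G y = T ∧ ¬ G.Adj r y)).card := by
    intro T
    rw [BB, mm, ← Finset.card_filter_add_card_filter_not
      (s := (univ.erase r).filter (fun y => deg G y = T)) (p := fun y => G.Adj r y),
      Finset.filter_filter, Finset.filter_filter]
  have hB0 : BB G r 0 = ((univ.erase r).filter (fun y => deg G y = 0 ∧ ¬ G.Adj r y)).card := by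
    rw [BB]
    congr 1
    apply Finset.filter_congr
    intro x _
    constructor
    · intro h
      refine ⟨h, fun hadj => ?_⟩
      have := one_le_deg_of_adj hadj.symm
      omega
    · exact fun h => h.1
  have hsub : ((univ.erase r).filter (fun y => deg G y = T1 ∧ ¬ G.Adj r y)
        ∪ (univ.erase r).filter (fun y => deg G y = T2 ∧ ¬ G.Adj r y))
        ∪ (univ.erase r).filter (fun y => deg G y = 0 ∧ ¬ G.Adj r y)
      ⊆ (univ.erase r).filter (fun y => ¬ G.Adj r y) := by
    intro x hx
    simp only [mem_union, mem_filter] at hx ⊢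
    rcases hx with (hx | hx) | hx <;> exact ⟨hx.1, hx.2.2⟩
  have hd12 : Disjoint ((univ.erase r).filter (fun y => deg G y = T1 ∧ ¬ G.Adj r y))
      ((univ.erase r).filter (fun y => deg G y = T2 ∧ ¬ G.Adj r y)) := by
    rw [Finset.disjoint_left]
    intro x hx hx'
    simp only [mem_filter] at hx hx'
    exact hne (hx.2.1 ▸ hx'.2.1 ▸ rfl)
  have hd0 : Disjoint ((univ.erase r).filter (fun y => deg G y = T1 ∧ ¬ G.Adj r y)
        ∪ (univ.erase r).filter (fun y => deg G y = T2 ∧ ¬ G.Adj r y))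
      ((univ.erase r).filter (fun y => deg G y = 0 ∧ ¬ G.Adj r y)) := by
    rw [Finset.disjoint_left]
    intro x hx hx'
    simp only [mem_union, mem_filter] at hx hx'
    rcases hx with hx | hx <;> omega
  have hcard := card_le_card hsub
  rw [Finset.card_union_of_disjoint hd0, Finset.card_union_of_disjoint hd12] at hcard
  rw [hBBsplit T1, hBBsplit T2, hB0]
  omega
lemma deg_full {x : Fin n} (hdeg : deg G x + 1 = n) : ∀ y, y ≠ x → G.Adj x y := by
  have hsub : G.neighborSet x ⊆ {x}ᶜ := by
    intro y hy
    simp only [Set.mem_compl_iff, Set.mem_singleton_iff]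
    exact fun h => G.irrefl (h ▸ hy)
  have hcompl : ({x}ᶜ : Set (Fin n)) = ↑(univ.erase x) := by
    ext y; simp [eq_comm]
  have hncard : ({x}ᶜ : Set (Fin n)).ncard = n - 1 := by
    rw [hcompl, Set.ncard_coe_finset, card_erase_of_mem (mem_univ x), card_univ,
      Fintype.card_fin]
  have heq : G.neighborSet x = {x}ᶜ := by
    apply Set.eq_of_subset_of_ncard_le hsub _ (Set.toFinite _)
    rw [hncard]
    have : (G.neighborSet x).ncard = deg G x := rfl
    omega
  intro y hy
  have : y ∈ G.neighborSet x := by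
    rw [heq]
    simpa using hy
  exact this

end Bounds

section Endgames

variable {G H : SimpleGraph (Fin n)} {u w : Fin n}

lemma BB_zero_no {r x : Fin n} {k : ℕ} (hBB : BB G r k = 0) (hx : x ≠ r)
    (hd : deg G x = k) : False := by
  rw [BB, Finset.card_eq_zero] at hBB
  have : x ∈ (univ.erase r).filter (fun y => deg G y = k) :=
    mem_filter.2 ⟨mem_erase.2 ⟨hx, mem_univ _⟩, hd⟩
  rw [hBB] at this
  exact absurd this (Finset.notMem_empty x)

lemma BB_ge_n (G : SimpleGraph (Fin n)) (r : Fin n) {k : ℕ} (hk : n ≤ k) :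
    BB G r k = 0 := by
  rw [BB, Finset.card_eq_zero, Finset.filter_eq_empty_iff]
  intro x _
  have := deg_le G x
  omega

lemma BB_mem_unique {r : Fin n} {k : ℕ} (hBB : BB G r k ≤ 1) {x y : Fin n}
    (hx : x ≠ r) (hdx : deg G x = k) (hy : y ≠ r) (hdy : deg G y = k) : x = y := by
  refine Finset.card_le_one.1 hBB x ?_ y ?_
  · exact mem_filter.2 ⟨mem_erase.2 ⟨hx, mem_univ _⟩, hdx⟩
  · exact mem_filter.2 ⟨mem_erase.2 ⟨hy, mem_univ _⟩, hdy⟩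

variable (π : {x : Fin n // x ≠ u} ≃ {y : Fin n // y ≠ w})
variable (hpoint : ∀ x : {x : Fin n // x ≠ u}, deg G x.1 = deg H (π x).1 + 1)
variable (SH : ∀ x : {x : Fin n // x ≠ u}, CD G x.1 = CD H (π x).1)

include hpoint SH in
lemma endgameB (hn : n = 7)
    (hBB1 : BB G u 1 = 0) (hBB2 : BB G u 2 = 2) (hBB3 : BB G u 3 = 0)
    (hBB4 : BB G u 4 = 3) (hBB5 : BB G u 5 = 1) (hBB6 : BB G u 6 = 0)
    (hdu : deg G u = 1) (hdw : deg H w = 5) (hmmH1 : mm H w 1 = 1) : False := by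
  subst hn
  -- extract the degree-1 vertex of H adjacent to w
  obtain ⟨h0, hh0⟩ : ∃ h0, h0 ∈ (univ.erase w).filter
      (fun y => deg H y = 1 ∧ H.Adj w y) := Finset.card_pos.1 (by rw [← mm] at *; omega)
  rw [mem_filter, mem_erase] at hh0
  obtain ⟨⟨hh0w, -⟩, hdh0, hadjwh0⟩ := hh0
  -- all neighbors of h0 equal w
  have hnbr : ∀ y, H.Adj h0 y → y = w := by
    intro y hy
    have hcard : (univ.filter (fun z => H.Adj h0 z)).card = 1 := by
      rw [← deg_eq]; omega
    refine Finset.card_le_one.1 (le_of_eq hcard) y ?_ w ?_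
    · exact mem_filter.2 ⟨mem_univ _, hy⟩
    · exact mem_filter.2 ⟨mem_univ _, hadjwh0.symm⟩
  -- classification of H degrees
  have hclassH : ∀ y, y ≠ w → deg H y = 1 ∨ deg H y = 3 ∨ deg H y = 4 := by
    intro y hy
    have h6 := deg_le H y
    have hz0 : BB H w 0 = 0 := by rw [BB_transfer π hpoint]; exact hBB1
    have hz2 : BB H w 2 = 0 := by rw [BB_transfer π hpoint]; exact hBB3
    have hz5 : BB H w 5 = 0 := by rw [BB_transfer π hpoint]; exact hBB6
    have hz6 : BB H w 6 = 0 := by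
      rw [BB_transfer π hpoint]; exact BB_ge_n G u (by omega)
    have hcases : deg H y = 0 ∨ deg H y = 1 ∨ deg H y = 2 ∨ deg H y = 3 ∨ deg H y = 4
        ∨ deg H y = 5 ∨ deg H y = 6 := by omega
    rcases hcases with h|h|h|h|h|h|h
    · exact (BB_zero_no hz0 hy h).elim
    · exact Or.inl h
    · exact (BB_zero_no hz2 hy h).elim
    · exact Or.inr (Or.inl h)
    · exact Or.inr (Or.inr h)
    · exact (BB_zero_no hz5 hy h).elim
    · exact (BB_zero_no hz6 hy h).elim
  -- classification of G degrees
  have hclassG : ∀ x, x ≠ u → deg G x = 2 ∨ deg G x = 4 ∨ deg G x = 5 := by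
    intro x hx
    have h6 := deg_le G x
    have h1 : 1 ≤ deg G x := by
      have h := hpoint ⟨x, hx⟩
      have h2 : deg G x = deg H (π ⟨x, hx⟩).1 + 1 := h
      omega
    have hcases : deg G x = 1 ∨ deg G x = 2 ∨ deg G x = 3 ∨ deg G x = 4
        ∨ deg G x = 5 ∨ deg G x = 6 := by omega
    rcases hcases with h|h|h|h|h|h
    · exact (BB_zero_no hBB1 hx h).elim
    · exact Or.inl h
    · exact (BB_zero_no hBB3 hx h).elim
    · exact Or.inr (Or.inl h)
    · exact Or.inr (Or.inr h)
    · exact (BB_zero_no hBB6 hx h).elim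
  -- the corresponding vertex of G
  have hπc' : π (π.symm ⟨h0, hh0w⟩) = ⟨h0, hh0w⟩ := Equiv.apply_symm_apply _ _
  obtain ⟨c', hc'u, hdegc', hCD⟩ :
      ∃ c', c' ≠ u ∧ deg G c' = 2 ∧ CD G c' = CD H h0 := by
    refine ⟨(π.symm ⟨h0, hh0w⟩).1, (π.symm ⟨h0, hh0w⟩).2, ?_, ?_⟩
    · have hh := hpoint (π.symm ⟨h0, hh0w⟩)
      rw [hπc'] at hh
      have hh2 : deg G (π.symm ⟨h0, hh0w⟩).1 = deg H h0 + 1 := hh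
      omega
    · have hh := SH (π.symm ⟨h0, hh0w⟩)
      rw [hπc'] at hh
      exact hh
  -- H-side count equals 3
  have hcountH : ((univ.erase h0).filter (fun y => fdeg H h0 y = 3)).card = 3 := by
    have hseteq : (univ.erase h0).filter (fun y => fdeg H h0 y = 3)
        = (univ.erase w).filter (fun y => deg H y = 3) := by
      ext y
      simp only [mem_filter, mem_erase, mem_univ, and_true, true_and]
      constructor
      · rintro ⟨hyh, hfd⟩
        rw [fdeg] at hfd
        by_cases hyw : y = w
        · subst hyw
          rw [if_pos hadjwh0.symm] at hfd
          omega
        · rcases hclassH y hyw with h | h | h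
          · rw [h] at hfd; split at hfd <;> omega
          · exact ⟨hyw, h⟩
          · have hnadj : ¬ H.Adj h0 y := fun hadj => hyw (hnbr y hadj)
            rw [if_neg hnadj, h] at hfd
            omega
      · rintro ⟨hyw, hdy⟩
        have hyh : y ≠ h0 := fun h => by rw [h, hdh0] at hdy; omega
        have hnadj : ¬ H.Adj h0 y := fun hadj => hyw (hnbr y hadj)
        rw [fdeg, if_neg hnadj, hdy]
        exact ⟨hyh, rfl⟩
    rw [hseteq, ← BB]
    rw [BB_transfer π hpoint]
    exact hBB4
  -- G-side count at most 2
  have hcountG : ((univ.erase c').filter (fun x => fdeg G c' x = 3)).card ≤ 2 := by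
    have hsub : (univ.erase c').filter (fun x => fdeg G c' x = 3)
        ⊆ (univ.erase c').filter (fun x => G.Adj c' x) := by
      intro x hx
      rw [mem_filter] at hx ⊢
      obtain ⟨hxc, hfd⟩ := hx
      refine ⟨hxc, ?_⟩
      rw [fdeg] at hfd
      by_cases hxu : x = u
      · subst hxu
        rw [hdu] at hfd
        split at hfd <;> omega
      · rcases hclassG x hxu with h | h | h <;> rw [h] at hfd <;>
          by_contra hnadj <;> rw [if_neg hnadj] at hfd <;> omega
    have := card_le_card hsub
    rw [← deg_eq_erase] at this
    omega
  -- conclude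
  have hfinal : ((univ.erase c').filter (fun x => fdeg G c' x = 3)).card
      = ((univ.erase h0).filter (fun y => fdeg H h0 y = 3)).card := by
    have h1 := CD_countP G c' (fun t => t = 3)
    have h2 := CD_countP H h0 (fun t => t = 3)
    rw [← h1, ← h2, hCD]
  omega

include hpoint SH in
lemma endgameA (hn : n = 7)
    (hBB1 : BB G u 1 = 0) (hBB2 : BB G u 2 = 1) (hBB3 : BB G u 3 = 3)
    (hBB4 : BB G u 4 = 0) (hBB5 : BB G u 5 = 2) (hBB6 : BB G u 6 = 0)
    (hdu : deg G u = 1) (hdw : deg H w = 5) (hmmH1 : mm H w 1 = 0)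
    (hmmG2 : mm G u 2 = 0) : False := by
  subst hn
  -- extract the degree-2 vertex of G
  obtain ⟨c, hc⟩ : ∃ c, c ∈ (univ.erase u).filter (fun x => deg G x = 2) :=
    Finset.card_pos.1 (by rw [← BB] at *; omega)
  rw [mem_filter, mem_erase] at hc
  obtain ⟨⟨hcu, -⟩, hdc⟩ := hc
  -- its partner z0 in H
  obtain ⟨z0, hz0w, hdz0, hCD⟩ :
      ∃ z0, z0 ≠ w ∧ deg H z0 = 1 ∧ CD G c = CD H z0 := by
    refine ⟨(π ⟨c, hcu⟩).1, (π ⟨c, hcu⟩).2, ?_, SH ⟨c, hcu⟩⟩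
    have hh : deg G c = deg H (π ⟨c, hcu⟩).1 + 1 := hpoint ⟨c, hcu⟩
    omega
  -- w is not adjacent to z0
  have hwz : ¬ H.Adj w z0 := by
    intro hadj
    have : z0 ∈ (univ.erase w).filter (fun y => deg H y = 1 ∧ H.Adj w y) :=
      mem_filter.2 ⟨mem_erase.2 ⟨hz0w, mem_univ _⟩, hdz0, hadj⟩
    have hpos := Finset.card_pos.2 ⟨z0, this⟩
    rw [← mm] at hpos
    omega
  -- u is not adjacent to c
  have huc : ¬ G.Adj u c := by
    intro hadj
    have : c ∈ (univ.erase u).filter (fun x => deg G x = 2 ∧ G.Adj u x) :=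
      mem_filter.2 ⟨mem_erase.2 ⟨hcu, mem_univ _⟩, hdc, hadj⟩
    have hpos := Finset.card_pos.2 ⟨c, this⟩
    rw [← mm] at hpos
    omega
  -- classifications
  have hclassG : ∀ x, x ≠ u → deg G x = 2 ∨ deg G x = 3 ∨ deg G x = 5 := by
    intro x hx
    have h6 := deg_le G x
    have h1 : 1 ≤ deg G x := by
      have h2 : deg G x = deg H (π ⟨x, hx⟩).1 + 1 := hpoint ⟨x, hx⟩
      omega
    have hcases : deg G x = 1 ∨ deg G x = 2 ∨ deg G x = 3 ∨ deg G x = 4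
        ∨ deg G x = 5 ∨ deg G x = 6 := by omega
    rcases hcases with h|h|h|h|h|h
    · exact (BB_zero_no hBB1 hx h).elim
    · exact Or.inl h
    · exact Or.inr (Or.inl h)
    · exact (BB_zero_no hBB4 hx h).elim
    · exact Or.inr (Or.inr h)
    · exact (BB_zero_no hBB6 hx h).elim
  have hBH0 : BB H w 0 = 0 := by rw [BB_transfer π hpoint]; exact hBB1
  have hBH1 : BB H w 1 = 1 := by rw [BB_transfer π hpoint]; exact hBB2
  have hBH2 : BB H w 2 = 3 := by rw [BB_transfer π hpoint]; exact hBB3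
  have hBH3 : BB H w 3 = 0 := by rw [BB_transfer π hpoint]; exact hBB4
  have hBH4 : BB H w 4 = 2 := by rw [BB_transfer π hpoint]; exact hBB5
  have hBH5 : BB H w 5 = 0 := by rw [BB_transfer π hpoint]; exact hBB6
  have hBH6 : BB H w 6 = 0 := by
    rw [BB_transfer π hpoint]; exact BB_ge_n G u (by omega)
  have hclassH : ∀ y, y ≠ w → deg H y = 1 ∨ deg H y = 2 ∨ deg H y = 4 := by
    intro y hy
    have h6 := deg_le H y
    have hcases : deg H y = 0 ∨ deg H y = 1 ∨ deg H y = 2 ∨ deg H y = 3 ∨ deg H y = 4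
        ∨ deg H y = 5 ∨ deg H y = 6 := by omega
    rcases hcases with h|h|h|h|h|h|h
    · exact (BB_zero_no hBH0 hy h).elim
    · exact Or.inl h
    · exact Or.inr (Or.inl h)
    · exact (BB_zero_no hBH3 hy h).elim
    · exact Or.inr (Or.inr h)
    · exact (BB_zero_no hBH5 hy h).elim
    · exact (BB_zero_no hBH6 hy h).elim
  -- uniqueness of degree-1 vertex in H
  have huniq1 : ∀ y, y ≠ w → deg H y = 1 → y = z0 := by
    intro y hy hd
    exact BB_mem_unique (le_of_eq hBH1) hy hd hz0w hdz0
  -- G-side count is 3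
  have hcountG : ((univ.erase c).filter
      (fun x => 2 ≤ fdeg G c x ∧ fdeg G c x ≤ 3)).card = 3 := by
    have hseteq : (univ.erase c).filter (fun x => 2 ≤ fdeg G c x ∧ fdeg G c x ≤ 3)
        = (univ.erase u).filter (fun x => deg G x = 3) := by
      ext x
      simp only [mem_filter, mem_erase, mem_univ, and_true, true_and]
      constructor
      · rintro ⟨hxc, hfd1, hfd2⟩
        rw [fdeg] at hfd1 hfd2
        by_cases hxu : x = u
        · have hdx : deg G x = 1 := by rw [hxu]; exact hdu
          have hnadj : ¬ G.Adj c x := by rw [hxu]; exact fun h => huc h.symm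
          rw [if_neg hnadj, hdx] at hfd1
          omega
        · rcases hclassG x hxu with h | h | h
          · exact absurd (BB_mem_unique (le_of_eq hBB2) hxu h hcu hdc) hxc
          · exact ⟨hxu, h⟩
          · rw [h] at hfd1 hfd2; split at hfd2 <;> omega
      · rintro ⟨hxu, hdx⟩
        have hxc : x ≠ c := fun h => by rw [h, hdc] at hdx; omega
        refine ⟨hxc, ?_, ?_⟩ <;> rw [fdeg, hdx] <;> split <;> omega
    rw [hseteq, ← BB, hBB3]
  -- H-side count
  have hdisj : Disjoint ((univ.erase z0).filter (fun y => deg H y = 2 ∧ ¬ H.Adj z0 y))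
      ((univ.erase z0).filter (fun y => deg H y = 4 ∧ H.Adj z0 y)) := by
    rw [Finset.disjoint_left]
    intro y hy hy'
    rw [mem_filter] at hy hy'
    omega
  have hsetH : (univ.erase z0).filter (fun y => 2 ≤ fdeg H z0 y ∧ fdeg H z0 y ≤ 3)
      = ((univ.erase z0).filter (fun y => deg H y = 2 ∧ ¬ H.Adj z0 y))
        ∪ ((univ.erase z0).filter (fun y => deg H y = 4 ∧ H.Adj z0 y)) := by
    ext y
    simp only [mem_union, mem_filter, mem_erase, mem_univ, and_true, true_and]
    constructor
    · rintro ⟨hyz, hfd1, hfd2⟩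
      rw [fdeg] at hfd1 hfd2
      by_cases hyw : y = w
      · have hdy : deg H y = 5 := by rw [hyw]; exact hdw
        rw [hdy] at hfd1 hfd2
        split at hfd2 <;> omega
      · rcases hclassH y hyw with h | h | h
        · exact absurd (huniq1 y hyw h) hyz
        · rw [h] at hfd1 hfd2
          left
          refine ⟨hyz, h, ?_⟩
          intro hadj
          rw [if_pos hadj] at hfd1
          omega
        · rw [h] at hfd1 hfd2
          right
          refine ⟨hyz, h, ?_⟩
          by_contra hnadj
          rw [if_neg hnadj] at hfd2
          omega
    · rintro (⟨hyz, hd, hnadj⟩ | ⟨hyz, hd, hadj⟩)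
      · rw [fdeg, if_neg hnadj, hd]
        exact ⟨hyz, by omega, by omega⟩
      · rw [fdeg, if_pos hadj, hd]
        exact ⟨hyz, by omega, by omega⟩
  -- the degree-2 class over erase z0 equals that over erase w
  have hdeg2eq : (univ.erase z0).filter (fun y => deg H y = 2)
      = (univ.erase w).filter (fun y => deg H y = 2) := by
    ext y
    simp only [mem_filter, mem_erase, mem_univ, and_true, true_and]
    constructor
    · rintro ⟨hyz, hd⟩
      exact ⟨fun h => by rw [h, hdw] at hd; omega, hd⟩
    · rintro ⟨hyw, hd⟩
      exact ⟨fun h => by rw [h, hdz0] at hd; omega, hd⟩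
  have hsplit2 : ((univ.erase z0).filter (fun y => deg H y = 2 ∧ H.Adj z0 y)).card
      + ((univ.erase z0).filter (fun y => deg H y = 2 ∧ ¬ H.Adj z0 y)).card = 3 := by
    have h := Finset.card_filter_add_card_filter_not
      (s := (univ.erase z0).filter (fun y => deg H y = 2)) (p := fun y => H.Adj z0 y)
    rw [Finset.filter_filter, Finset.filter_filter, hdeg2eq, ← BB, hBH2] at h
    exact h
  -- neighbors of z0 split into the two adjacency classes
  have hnbrsplit : (univ.erase z0).filter (fun y => H.Adj z0 y)
      = ((univ.erase z0).filter (fun y => deg H y = 2 ∧ H.Adj z0 y))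
        ∪ ((univ.erase z0).filter (fun y => deg H y = 4 ∧ H.Adj z0 y)) := by
    ext y
    simp only [mem_union, mem_filter, mem_erase, mem_univ, and_true, true_and]
    constructor
    · rintro ⟨hyz, hadj⟩
      have hyw : y ≠ w := by
        intro h
        exact hwz (h ▸ hadj.symm)
      rcases hclassH y hyw with h | h | h
      · exact absurd (huniq1 y hyw h) hyz
      · exact Or.inl ⟨hyz, h, hadj⟩
      · exact Or.inr ⟨hyz, h, hadj⟩
    · rintro (⟨hyz, _, hadj⟩ | ⟨hyz, _, hadj⟩) <;> exact ⟨hyz, hadj⟩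
  have hdisj24 : Disjoint ((univ.erase z0).filter (fun y => deg H y = 2 ∧ H.Adj z0 y))
      ((univ.erase z0).filter (fun y => deg H y = 4 ∧ H.Adj z0 y)) := by
    rw [Finset.disjoint_left]
    intro y hy hy'
    rw [mem_filter] at hy hy'
    omega
  have hnbrcard : ((univ.erase z0).filter (fun y => deg H y = 2 ∧ H.Adj z0 y)).card
      + ((univ.erase z0).filter (fun y => deg H y = 4 ∧ H.Adj z0 y)).card = 1 := by
    have h := deg_eq_erase H z0
    rw [hdz0] at h
    rw [← Finset.card_union_of_disjoint hdisj24, ← hnbrsplit]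
    omega
  -- conclude
  have hfinal : ((univ.erase c).filter
        (fun x => 2 ≤ fdeg G c x ∧ fdeg G c x ≤ 3)).card
      = ((univ.erase z0).filter
        (fun y => 2 ≤ fdeg H z0 y ∧ fdeg H z0 y ≤ 3)).card := by
    have h1 := CD_countP G c (fun t => 2 ≤ t ∧ t ≤ 3)
    have h2 := CD_countP H z0 (fun t => 2 ≤ t ∧ t ≤ 3)
    rw [← h1, ← h2, hCD]
  rw [hcountG, hsetH, Finset.card_union_of_disjoint hdisj] at hfinal
  omega

include hpoint SH in
lemma contra (hn : 7 ≤ n) (hD : deg H w = deg G u + (n - 3)) : False := by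
  have hdle : deg G u ≤ 2 := by have := deg_le H w; omega
  have hcase : deg G u = 0 ∨ deg G u = 1 ∨ deg G u = 2 := by omega
  rcases hcase with hd | hd | hd
  · -- d = 0
    have E1 := ET π hpoint SH 1 (by omega) (by omega)
    rw [if_neg (show ¬ (1+1 ≤ deg G u) by omega),
      if_neg (show ¬ (deg G u = 1) by omega),
      if_pos (show 1+1 ≤ deg H w by omega)] at E1
    rw [show (1:ℕ)+1 = 2 by norm_num] at E1
    have hm1 : mm G u 1 = 0 := by have := mm_le_deg G u 1; omega
    have hmH1BB : mm H w 1 ≤ BB G u 2 := by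
      have h := mm_le_BB H w 1
      rw [BB_transfer π hpoint, show (1:ℕ)+1 = 2 by norm_num] at h
      exact h
    have pair := nonnbr_pair H w 1 2 (by omega) (by omega) (by omega)
    rw [BB_transfer π hpoint 1, BB_transfer π hpoint 2, BB_transfer π hpoint 0,
      show (1:ℕ)+1 = 2 by norm_num, show (2:ℕ)+1 = 3 by norm_num,
      show (0:ℕ)+1 = 1 by norm_num] at pair
    have hmH2 : mm H w 2 ≤ BB G u 3 := by
      have h := mm_le_BB H w 2
      rw [BB_transfer π hpoint, show (2:ℕ)+1 = 3 by norm_num] at h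
      exact h
    have hB1le : BB G u 1 ≤ 1 := by
      by_contra hge
      push_neg at hge
      have h2 : (n-2-1) * 2 ≤ (n-2-1) * BB G u 1 := Nat.mul_le_mul_left _ (by omega)
      omega
    have hB1 : BB G u 1 = 0 ∨ BB G u 1 = 1 := by omega
    rcases hB1 with h | h
    · rw [h, Nat.mul_zero] at E1
      omega
    · rw [h, Nat.mul_one] at E1
      omega
  · -- d = 1
    have E5 := ET π hpoint SH (n-2) (by omega) (by omega)
    rw [if_neg (show ¬ (n-2+1 ≤ deg G u) by omega),
      if_neg (show ¬ (deg G u = n-2) by omega),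
      if_neg (show ¬ (n-2+1 ≤ deg H w) by omega),
      if_pos (show deg H w = n-2 by omega),
      show n-2-(n-2) = 0 by omega, Nat.zero_mul,
      show n-2+1 = n-1 by omega,
      show n-1-(n-2) = 1 by omega] at E5
    have hmm5 : mm H w (n-2) ≤ BB G u (n-1) := by
      have h := mm_le_BB H w (n-2)
      rw [BB_transfer π hpoint, show n-2+1 = n-1 by omega] at h
      exact h
    have hB6 : BB G u (n-1) = 0 := by
      by_contra h
      have h1 : 1 ≤ BB G u (n-1) := by omega
      have hsplit : (n-2) * BB G u (n-1) = (n-3) * BB G u (n-1) + BB G u (n-1) := by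
        rw [show n-2 = (n-3)+1 by omega, Nat.succ_mul]
      have h2 : (n-3) * 1 ≤ (n-3) * BB G u (n-1) := Nat.mul_le_mul_left _ h1
      rw [hsplit] at E5
      omega
    rw [hB6, Nat.mul_zero] at E5
    have hm5 : mm G u (n-2) = 1 := by omega
    have hmz : ∀ T, T ≠ n-2 → mm G u T = 0 := by
      intro T hT
      have := mm_pair_le_deg G u T (n-2) hT
      omega
    -- E(n-3)
    have E4 := ET π hpoint SH (n-3) (by omega) (by omega)
    rw [if_neg (show ¬ (n-3+1 ≤ deg G u) by omega),
      if_neg (show ¬ (deg G u = n-3) by omega),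
      if_pos (show n-3+1 ≤ deg H w by omega),
      show n-2-(n-3) = 1 by omega, Nat.one_mul,
      show n-3+1 = n-2 by omega] at E4
    rw [hmz (n-3) (by omega)] at E4
    have hmm4 : mm H w (n-3) ≤ BB G u (n-2) := by
      have h := mm_le_BB H w (n-3)
      rw [BB_transfer π hpoint, show n-3+1 = n-2 by omega] at h
      exact h
    have hB5pos : 1 ≤ BB G u (n-2) := by
      have := mm_le_BB G u (n-2)
      omega
    have hB5le : BB G u (n-2) ≤ 2 := by
      by_contra h
      push_neg at h
      have hsplit : (n-3) * BB G u (n-2) = (n-4) * BB G u (n-2) + BB G u (n-2) := by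
        rw [show n-3 = (n-4)+1 by omega, Nat.succ_mul]
      have h2 : (n-4) * 3 ≤ (n-4) * BB G u (n-2) := Nat.mul_le_mul_left _ (by omega)
      rw [hsplit] at E4
      omega
    have hB5or : BB G u (n-2) = 1 ∨ BB G u (n-2) = 2 := by omega
    -- common E1 setup
    have E1 := ET π hpoint SH 1 (by omega) (by omega)
    rw [if_neg (show ¬ (1+1 ≤ deg G u) by omega),
      if_pos (show deg G u = 1 by omega),
      if_pos (show 1+1 ≤ deg H w by omega),
      show (1:ℕ)+1 = 2 by norm_num, Nat.one_mul] at E1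
    rw [hmz 1 (by omega)] at E1
    have hmH1BB : mm H w 1 ≤ BB G u 2 := by
      have h := mm_le_BB H w 1
      rw [BB_transfer π hpoint, show (1:ℕ)+1 = 2 by norm_num] at h
      exact h
    rcases hB5or with hB5 | hB5
    · -- B5 = 1
      rw [hB5, Nat.mul_one] at E4
      have hm4or : mm H w (n-3) = 0 ∨ mm H w (n-3) = 1 := by omega
      rcases hm4or with hm4 | hm4
      · -- 4a : impossible by slack pair
        have pair := nonnbr_pair H w 1 (n-3) (by omega) (by omega) (by omega)
        rw [BB_transfer π hpoint 1, BB_transfer π hpoint (n-3), BB_transfer π hpoint 0,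
          show (1:ℕ)+1 = 2 by norm_num, show (0:ℕ)+1 = 1 by norm_num,
          show n-3+1 = n-2 by omega] at pair
        have hBG1 : BB G u 1 = 0 := by omega
        rw [hBG1, Nat.mul_zero] at E1
        omega
      · -- 4b : n = 7, profile B
        have hB4 : BB G u (n-3) = 3 := by omega
        have E3 := ET π hpoint SH (n-4) (by omega) (by omega)
        rw [if_neg (show ¬ (n-4+1 ≤ deg G u) by omega),
          if_neg (show ¬ (deg G u = n-4) by omega),
          if_pos (show n-4+1 ≤ deg H w by omega),
          show n-2-(n-4) = 2 by omega,
          show n-4+1 = n-3 by omega] at E3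
        rw [hmz (n-4) (by omega), hB4] at E3
        have hmm3 : mm H w (n-4) ≤ 3 := by
          have h := mm_le_BB H w (n-4)
          rw [BB_transfer π hpoint, show n-4+1 = n-3 by omega, hB4] at h
          exact h
        have hn7 : n = 7 := by omega
        subst hn7
        norm_num at E1 E3 E4 E5 hB4 hB5 hB6 hmz hm5 hmm3 hmm4 hmm5 hmH1BB hD
        -- E2
        have E2 := ET π hpoint SH 2 (by omega) (by omega)
        rw [if_neg (show ¬ (2+1 ≤ deg G u) by omega),
          if_neg (show ¬ (deg G u = 2) by omega),
          if_pos (show 2+1 ≤ deg H w by omega),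
          show (2:ℕ)+1 = 3 by norm_num] at E2
        norm_num at E2
        rw [hmz 2 (by omega)] at E2
        have hmH2BB : mm H w 2 ≤ BB G u 3 := by
          have h := mm_le_BB H w 2
          rw [BB_transfer π hpoint, show (2:ℕ)+1 = 3 by norm_num] at h
          exact h
        have hBG3 : BB G u 3 = 0 := by omega
        rw [hBG3] at E2
        have hBG2 : BB G u 2 = 2 := by omega
        rw [hBG2] at E1
        have hBG1 : BB G u 1 = 0 := by
          by_contra h
          have h1 : 1 ≤ BB G u 1 := by omega
          have h2 : 4 * 1 ≤ 4 * BB G u 1 := Nat.mul_le_mul_left _ h1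
          omega
        rw [hBG1] at E1
        have hmmH1 : mm H w 1 = 1 := by omega
        exact endgameB π hpoint SH rfl hBG1 hBG2 hBG3 hB4 hB5 hB6 hd (by omega) hmmH1
    · -- B5 = 2 : n = 7, profile A
      rw [hB5] at E4
      have hn7 : n = 7 := by omega
      subst hn7
      norm_num at E1 E4 E5 hB5 hB6 hmz hm5 hmm4 hmm5 hmH1BB hD
      have hB4 : BB G u 4 = 0 := by omega
      have hmmH4 : mm H w 4 = 2 := by omega
      -- E3
      have E3 := ET π hpoint SH 3 (by omega) (by omega)
      rw [if_neg (show ¬ (3+1 ≤ deg G u) by omega),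
        if_neg (show ¬ (deg G u = 3) by omega),
        if_pos (show 3+1 ≤ deg H w by omega),
        show (3:ℕ)+1 = 4 by norm_num] at E3
      norm_num at E3
      rw [hmz 3 (by omega), hB4] at E3
      have hmH3BB : mm H w 3 ≤ BB G u 4 := by
        have h := mm_le_BB H w 3
        rw [BB_transfer π hpoint, show (3:ℕ)+1 = 4 by norm_num] at h
        exact h
      rw [hB4] at hmH3BB
      have hBG3 : BB G u 3 = 3 := by omega
      -- E2
      have E2 := ET π hpoint SH 2 (by omega) (by omega)
      rw [if_neg (show ¬ (2+1 ≤ deg G u) by omega),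
        if_neg (show ¬ (deg G u = 2) by omega),
        if_pos (show 2+1 ≤ deg H w by omega),
        show (2:ℕ)+1 = 3 by norm_num] at E2
      norm_num at E2
      rw [hmz 2 (by omega), hBG3] at E2
      have hmH2BB : mm H w 2 ≤ BB G u 3 := by
        have h := mm_le_BB H w 2
        rw [BB_transfer π hpoint, show (2:ℕ)+1 = 3 by norm_num] at h
        exact h
      rw [hBG3] at hmH2BB
      have hBG2le : BB G u 2 ≤ 1 := by
        by_contra h
        have h1 : 2 ≤ BB G u 2 := by omega
        have h2 : 3 * 2 ≤ 3 * BB G u 2 := Nat.mul_le_mul_left _ h1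
        omega
      have hBG1 : BB G u 1 = 0 := by
        by_contra h
        have h1 : 1 ≤ BB G u 1 := by omega
        have h2 : 4 * 1 ≤ 4 * BB G u 1 := Nat.mul_le_mul_left _ h1
        omega
      rw [hBG1] at E1
      have hBG2 : BB G u 2 = 1 := by omega
      rw [hBG2] at E1
      have hmmH1 : mm H w 1 = 0 := by omega
      exact endgameA π hpoint SH rfl hBG1 hBG2 hBG3 hB4 hB5 hB6 hd (by omega) hmmH1
        (hmz 2 (by omega))
  · -- d = 2
    have E := ET π hpoint SH (n-2) (by omega) (by omega)
    rw [if_neg (show ¬ (n-2+1 ≤ deg G u) by omega),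
      if_neg (show ¬ (deg G u = n-2) by omega),
      if_pos (show n-2+1 ≤ deg H w by omega),
      show n-2-(n-2) = 0 by omega, Nat.zero_mul,
      show n-2+1 = n-1 by omega] at E
    have hmm' : mm H w (n-2) ≤ BB G u (n-1) := by
      have h := mm_le_BB H w (n-2)
      rw [BB_transfer π hpoint, show n-2+1 = n-1 by omega] at h
      exact h
    have hC6 : BB G u (n-1) ≤ mm G u (n-1) := by
      rw [BB, mm]
      apply card_le_card
      intro x hx
      rw [mem_filter] at hx ⊢
      refine ⟨hx.1, hx.2, ?_⟩
      have hxu : u ≠ x := Ne.symm (mem_erase.1 hx.1).1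
      exact (deg_full G (by omega) u hxu).symm
    have hpair := mm_pair_le_deg G u (n-2) (n-1) (by omega)
    have hmmdeg := mm_le_deg G u (n-2)
    have hBle : BB G u (n-1) ≤ 1 := by
      by_contra h
      push_neg at h
      have hsplit : (n-2) * BB G u (n-1) = (n-3) * BB G u (n-1) + BB G u (n-1) := by
        rw [show n-2 = (n-3)+1 by omega, Nat.succ_mul]
      have h2 : (n-3) * 2 ≤ (n-3) * BB G u (n-1) := Nat.mul_le_mul_left _ (by omega)
      rw [hsplit] at E
      omega
    have hBor : BB G u (n-1) = 0 ∨ BB G u (n-1) = 1 := by omega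
    rcases hBor with h | h
    · rw [h, Nat.mul_zero] at E
      omega
    · rw [h, Nat.mul_one] at E
      have pair2 := nonnbr_pair H w (n-2) 1 (by omega) (by omega) (by omega)
      have hmmH1le : mm H w 1 ≤ BB H w 1 := mm_le_BB H w 1
      have hBHtrans : BB H w (n-2) = BB G u (n-1) := by
        rw [BB_transfer π hpoint, show n-2+1 = n-1 by omega]
      rw [hBHtrans, h] at pair2
      omega

end Endgames

section Final

variable {G H : SimpleGraph (Fin n)} {u w : Fin n}
  (π : {x : Fin n // x ≠ u} ≃ {y : Fin n // y ≠ w})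

lemma card_subU (u : Fin n) (hn : 1 ≤ n) : Fintype.card {x : Fin n // x ≠ u} = n - 1 := by
  rw [Fintype.card_subtype_compl, Fintype.card_fin, Fintype.card_subtype_eq]

lemma final_multiset (hpointEq : ∀ x : {x : Fin n // x ≠ u}, deg G x.1 = deg H (π x).1)
    (hdeq : deg G u = deg H w) :
    univ.val.map (fun v => deg G v) = univ.val.map (fun v => deg H v) := by
  have hsplit : ∀ (K : SimpleGraph (Fin n)) (r : Fin n),
      univ.val.map (fun v => deg K v)
        = deg K r ::ₘ (univ.erase r).val.map (fun v => deg K v) := by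
    intro K r
    conv_lhs => rw [← Finset.insert_erase (mem_univ r)]
    rw [Finset.insert_val, Multiset.ndinsert_of_notMem ?hnm, Multiset.map_cons]
    case hnm =>
      exact fun h => Finset.notMem_erase r univ (by rwa [Finset.mem_val] at h)
  rw [hsplit G u, hsplit H w, hdeq]
  congr 1
  rw [erase_val_map u, erase_val_map w]
  have hper : (univ : Finset {y : Fin n // y ≠ w})
      = (univ : Finset {x : Fin n // x ≠ u}).map π.toEmbedding :=
    (Finset.map_univ_equiv π).symm
  rw [hper, Finset.map_val, Multiset.map_map]
  apply Multiset.map_congr rfl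
  intro x _
  exact hpointEq x

include π in
theorem degseq_main (hn : 7 ≤ n)
    (SH : ∀ x : {x : Fin n // x ≠ u}, CD G x.1 = CD H (π x).1) :
    univ.val.map (fun v => deg G v) = univ.val.map (fun v => deg H v) := by
  have hcard := card_subU u (by omega)
  haveI hne : Nonempty {x : Fin n // x ≠ u} := by
    rw [← Fintype.card_pos_iff, hcard]
    omega
  obtain ⟨x0⟩ := hne
  set a := deg G x0.1 with ha
  set b := deg H (π x0).1 with hb
  -- the per-vertex sum relation
  have hstar : ∀ x : {x : Fin n // x ≠ u},
      (∑ z ∈ univ, deg G z) + 2 * deg H (π x).1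
        = (∑ z ∈ univ, deg H z) + 2 * deg G x.1 := by
    intro x
    have h1 := CD_sum G x.1
    have h2 := CD_sum H (π x).1
    have h3 : (CD G x.1).sum = (CD H (π x).1).sum := by rw [SH x]
    omega
  -- pointwise offset relation
  have hoff : ∀ x : {x : Fin n // x ≠ u},
      deg G x.1 + b = deg H (π x).1 + a := by
    intro x
    have h1 := hstar x
    have h2 := hstar x0
    omega
  -- sums over the erased sets
  have hsG : ∑ z ∈ univ, deg G z = (∑ z ∈ univ.erase u, deg G z) + deg G u :=
    (Finset.sum_erase_add _ _ (mem_univ u)).symm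
  have hsH : ∑ z ∈ univ, deg H z = (∑ z ∈ univ.erase w, deg H z) + deg H w :=
    (Finset.sum_erase_add _ _ (mem_univ w)).symm
  have hS1 : (∑ z ∈ univ.erase u, deg G z) + (n-1) * b
      = (∑ z ∈ univ.erase w, deg H z) + (n-1) * a := by
    have h := Finset.sum_congr rfl (fun x (_ : x ∈ (univ : Finset {x : Fin n // x ≠ u}))
      => hoff x)
    rw [Finset.sum_add_distrib, Finset.sum_add_distrib, Finset.sum_const,
      Finset.sum_const, card_univ, hcard, ← erase_sum_subtype u (fun z => deg G z),
      ← sum_transfer π (fun z => deg H z), smul_eq_mul, smul_eq_mul] at h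
    exact h
  have hS2 := hstar x0
  rw [hsG, hsH, ← ha, ← hb] at hS2
  -- case analysis on a vs b
  rcases Nat.lt_trichotomy a b with hab | hab | hab
  · -- b > a : either b = a+1 (contradiction via contra swapped) or b ≥ a+2 (arith contra)
    rcases Nat.lt_or_ge a (b-1) with h2 | h2
    · -- b ≥ a + 2 : arithmetic contradiction
      exfalso
      have hble : b ≤ n - 1 := by have := deg_le H (π x0).1; omega
      have hsplitmul : (n-1) * b = (n-1) * a + (n-3) * (b-a) + 2 * (b-a) := by
        have h3 : (n-1) * b = (n-1) * a + (n-1) * (b-a) := by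
          rw [← Nat.mul_add]
          congr 1
          omega
        have h4 : (n-1) * (b-a) = (n-3) * (b-a) + 2 * (b-a) := by
          rw [show n-1 = (n-3)+2 by omega, Nat.add_mul]
        omega
      have h5 : (n-3) * 2 ≤ (n-3) * (b-a) := Nat.mul_le_mul_left _ (by omega)
      have hdGle := deg_le G u
      rw [hsplitmul] at hS1
      omega
    · -- b = a + 1 : apply contra with roles swapped
      exfalso
      have hb1 : b = a + 1 := by omega
      have hpoint' : ∀ y : {y : Fin n // y ≠ w},
          deg H y.1 = deg G (π.symm y).1 + 1 := by
        intro y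
        have h := hoff (π.symm y)
        rw [Equiv.apply_symm_apply] at h
        omega
      have SH' : ∀ y : {y : Fin n // y ≠ w}, CD H y.1 = CD G (π.symm y).1 := by
        intro y
        have h := SH (π.symm y)
        rw [Equiv.apply_symm_apply] at h
        exact h.symm
      have hD' : deg G u = deg H w + (n - 3) := by
        have hsplitmul : (n-1) * b = (n-1) * a + (n-1) := by
          rw [hb1, Nat.mul_add, Nat.mul_one]
        rw [hsplitmul] at hS1
        omega
      exact contra π.symm hpoint' SH' hn hD'
  · -- a = b : degrees match
    have hdeq : deg G u = deg H w := by
      have hsplitmul : (n-1) * b = (n-1) * a := by rw [hab]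
      rw [hsplitmul] at hS1
      omega
    apply final_multiset π _ hdeq
    intro x
    have := hoff x
    omega
  · -- a > b
    rcases Nat.lt_or_ge b (a-1) with h2 | h2
    · -- a ≥ b + 2 : arithmetic contradiction
      exfalso
      have hale : a ≤ n - 1 := by have := deg_le G x0.1; omega
      have hsplitmul : (n-1) * a = (n-1) * b + (n-3) * (a-b) + 2 * (a-b) := by
        have h3 : (n-1) * a = (n-1) * b + (n-1) * (a-b) := by
          rw [← Nat.mul_add]
          congr 1
          omega
        have h4 : (n-1) * (a-b) = (n-3) * (a-b) + 2 * (a-b) := by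
          rw [show n-1 = (n-3)+2 by omega, Nat.add_mul]
        omega
      have h5 : (n-3) * 2 ≤ (n-3) * (a-b) := Nat.mul_le_mul_left _ (by omega)
      have hdHle := deg_le H w
      rw [hsplitmul] at hS1
      omega
    · -- a = b + 1 : apply contra directly
      exfalso
      have ha1 : a = b + 1 := by omega
      have hpoint' : ∀ x : {x : Fin n // x ≠ u},
          deg G x.1 = deg H (π x).1 + 1 := by
        intro x
        have h := hoff x
        omega
      have hD' : deg H w = deg G u + (n - 3) := by
        have hsplitmul : (n-1) * a = (n-1) * b + (n-1) := by
          rw [ha1, Nat.mul_add, Nat.mul_one]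
        rw [hsplitmul] at hS1
        omega
      exact contra π hpoint' SH hn hD'

end Final

end DSR


theorem degree_sequence_eq {n : ℕ} (hn : 7 ≤ n)
    (G H : SimpleGraph (Fin n)) (hshare : ShareCards G H) :
    Finset.univ.val.map (fun v => deg G v) =
      Finset.univ.val.map (fun v => deg H v) := by
  obtain ⟨u, w, π, hvia⟩ := hshare
  have SH : ∀ x : {x : Fin n // x ≠ u}, DSR.CD G x.1 = DSR.CD H (π x).1 :=
    fun x => DSR.CD_share (hvia x).some
  exact DSR.degseq_main π hn SH
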